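/- Upper bound on the trajectory cross-entropy (Eq. (8) of the paper): fix an adversary ν and a victim policy π, and suppose that for every pair (o, a) with ρ_v(π)(o, a) > 0 and every state sequence s with p0(s_0) · ∏_{t=1}^{T} p(s_t | s_{t−1}, a_{t−1}) > 0, one has ν_0(o_0 | s_0) > 0 and ν_t(o_t | s_{≤t}, o_{<t}, a_{<t}) > 0 for all 1 ≤ t ≤ T (in particular ρ_v(ν, π)(o, a) > 0 whenever ρ_v(π)(o, a) > 0). Writing q(s | a) := p0(s_0) · ∏_{t=1}^{T} p(s_t | s_{t−1}, a_{t−1}) for the state-sequence weight, the cross-entropy H[ρ_v(π), ρ_v(ν, π)] := −Σ_{(o,a)} ρ_v(π)(o, a) · log ρ_v(ν, π)(o, a) satisfies H[ρ_v(π), ρ_v(ν, π)] ≤ −Σ_{(o,a)} ρ_v(π)(o, a) · [ log π_0(a_0 | o_0) + Σ_{t=1}^{T} log π_t(a_t | o_{≤t}, a_{<t}) + Σ_{s} q(s | a) · ( log ν_0(o_0 | s_0) + Σ_{t=1}^{T} log ν_t(o_t | s_{≤t}, o_{<t}, a_{<t}) ) ]. -/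

import Mathlib

lemma jensen_log {ι : Type*} [Fintype ι] (w x : ι → ℝ) (h0 : ∀ i, 0 ≤ w i)
    (h1 : ∑ i, w i = 1) (hx : ∀ i, w i ≠ 0 → 0 < x i) :
    ∑ i, w i * Real.log (x i) ≤ Real.log (∑ i, w i * x i) := by
  classical
  set t := Finset.univ.filter (fun i => w i ≠ 0) with ht
  have hw : ∀ (P : ι → ℝ), ∑ i ∈ t, w i * P i = ∑ i, w i * P i := by
    intro P
    apply Finset.sum_filter_of_ne
    intro i _ h hw0
    exact h (by rw [hw0, zero_mul])
  have hwsum : ∑ i ∈ t, w i = 1 := by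
    rw [Finset.sum_filter_of_ne (fun i _ h => h)]; exact h1
  have hj := (strictConcaveOn_log_Ioi.concaveOn).le_map_sum
    (t := t) (w := w) (p := x) (fun i _ => h0 i) hwsum
    (fun i hi => hx i (by simpa [ht] using hi))
  rw [← hw (fun i => Real.log (x i)), ← hw x]
  simpa [smul_eq_mul] using hj

lemma chain_sum {S : Type} [Fintype S] :
    ∀ (T : ℕ) (f0 : S → ENNReal) (f : Fin T → S → S → ENNReal),
      (∑ z, f0 z = 1) → (∀ i z, ∑ y, f i z y = 1) →
      ∑ s : Fin (T + 1) → S, f0 (s 0) * ∏ i : Fin T, f i (s i.castSucc) (s i.succ) = 1 := by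
  intro T
  induction T with
  | zero =>
    intro f0 f h0 _
    simp only [Finset.univ_eq_empty, Finset.prod_empty, mul_one]
    rw [← h0]
    exact Fintype.sum_equiv (Equiv.funUnique (Fin 1) S) _ _ (fun s => rfl)
  | succ T IH =>
    intro f0 f h0 hf
    rw [← Fintype.sum_equiv (Fin.consEquiv (fun _ : Fin (T + 2) => S))
      (fun q => f0 ((Fin.consEquiv (fun _ : Fin (T + 2) => S)) q 0) *
        ∏ i : Fin (T + 1), f i ((Fin.consEquiv (fun _ : Fin (T + 2) => S)) q i.castSucc)
          ((Fin.consEquiv (fun _ : Fin (T + 2) => S)) q i.succ)) _ (fun q => rfl)]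
    simp only [Fin.consEquiv_apply, Fintype.sum_prod_type, Fin.prod_univ_succ,
      Fin.cons_succ, Fin.castSucc_zero, Fin.cons_zero, ← Fin.succ_castSucc]
    calc ∑ z : S, ∑ s' : Fin (T+1) → S,
          f0 z * (f 0 z (s' 0) * ∏ i : Fin T, f i.succ (s' i.castSucc) (s' i.succ))
        = ∑ z : S, f0 z * ∑ s' : Fin (T+1) → S,
            f 0 z (s' 0) * ∏ i : Fin T, f i.succ (s' i.castSucc) (s' i.succ) := by
          simp [Finset.mul_sum]
      _ = 1 := by
          have : ∀ z : S, ∑ s' : Fin (T+1) → S,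
              f 0 z (s' 0) * ∏ i : Fin T, f i.succ (s' i.castSucc) (s' i.succ) = 1 := by
            intro z
            exact IH (f 0 z) (fun i => f i.succ) (hf 0 z) (fun i => hf i.succ)
          simp [this, h0]


/-- A victim policy: at time `t ≤ T`, maps the observation prefix `o_{≤ t}` and the
action prefix `a_{< t}` to a distribution over the action `a_t`. -/
def Pol (T : ℕ) (S A : Type) : Type :=
  (t : Fin (T + 1)) → (Fin (t.1 + 1) → S) → (Fin t.1 → A) → PMF A

/-- An adversary: at time `t ≤ T`, maps the true-state prefix `s_{≤ t}`, the past
observations `o_{< t}` and past actions `a_{< t}` to a distribution over `o_t`. -/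
def Adv (T : ℕ) (S A : Type) : Type :=
  (t : Fin (T + 1)) → (Fin (t.1 + 1) → S) → (Fin t.1 → S) → (Fin t.1 → A) → PMF S

/-- The prefix `x_{≤ t}` of a sequence `x`. -/
def upTo {T : ℕ} {X : Type} (x : Fin (T + 1) → X) (t : Fin (T + 1)) : Fin (t.1 + 1) → X :=
  fun i => x ⟨i.1, by have h1 := i.2; have h2 := t.2; omega⟩

/-- The strict prefix `x_{< t}` of a sequence `x`. -/
def below {T : ℕ} {X : Type} (x : Fin (T + 1) → X) (t : Fin (T + 1)) : Fin t.1 → X :=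
  fun i => x ⟨i.1, by have h1 := i.2; have h2 := t.2; omega⟩

/-- Density of the attacked joint trajectory distribution `ρ_a(ν, π)` at `(s, o, a)`. -/
noncomputable def rhoA {T : ℕ} {S A : Type} (p0 : PMF S) (p : S → A → PMF S)
    (ν : Adv T S A) (π : Pol T S A)
    (s o : Fin (T + 1) → S) (a : Fin (T + 1) → A) : ENNReal :=
  ∏ t : Fin (T + 1),
    (if t.1 = 0 then p0 (s t)
      else p (s ⟨t.1 - 1, by have := t.2; omega⟩) (a ⟨t.1 - 1, by have := t.2; omega⟩) (s t)) *
    ν t (upTo s t) (below o t) (below a t) (o t) *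
    π t (upTo o t) (below a t) (a t)

/-- Density of the unattacked trajectory distribution `ρ_v(π)` at `(s, a)`. -/
noncomputable def rhoV {T : ℕ} {S A : Type} (p0 : PMF S) (p : S → A → PMF S)
    (π : Pol T S A) (s : Fin (T + 1) → S) (a : Fin (T + 1) → A) : ENNReal :=
  ∏ t : Fin (T + 1),
    (if t.1 = 0 then p0 (s t)
      else p (s ⟨t.1 - 1, by have := t.2; omega⟩) (a ⟨t.1 - 1, by have := t.2; omega⟩) (s t)) *
    π t (upTo s t) (below a t) (a t)

/-- The state-sequence weight `q(s | a) = p0(s_0) · ∏_{t=1}^{T} p(s_t | s_{t-1}, a_{t-1})`. -/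
noncomputable def stateW {T : ℕ} {S A : Type} (p0 : PMF S) (p : S → A → PMF S)
    (s : Fin (T + 1) → S) (a : Fin (T + 1) → A) : ENNReal :=
  ∏ t : Fin (T + 1),
    if t.1 = 0 then p0 (s t)
      else p (s ⟨t.1 - 1, by have := t.2; omega⟩) (a ⟨t.1 - 1, by have := t.2; omega⟩) (s t)

/-- Upper bound on the trajectory cross-entropy (Eq. (8) of the paper):
assuming that, for every `(o, a)` in the support of `ρ_v(π)` and every state sequence `s`
with positive weight `q(s | a)`, all the adversary factors `ν_t(o_t | s_{≤t}, o_{<t}, a_{<t})`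
are positive, the cross-entropy `H[ρ_v(π), ρ_v(ν, π)] = −Σ_{(o,a)} ρ_v(π)(o,a) · log ρ_v(ν,π)(o,a)`
is bounded above by
`−Σ_{(o,a)} ρ_v(π)(o,a) · [ Σ_{t=0}^{T} log π_t(a_t | o_{≤t}, a_{<t})
  + Σ_s q(s|a) · Σ_{t=0}^{T} log ν_t(o_t | s_{≤t}, o_{<t}, a_{<t}) ]`. -/

lemma stateW_eq {T : ℕ} {S A : Type} (p0 : PMF S) (p : S → A → PMF S)
    (s : Fin (T + 1) → S) (a : Fin (T + 1) → A) :
    stateW p0 p s a = p0 (s 0) * ∏ i : Fin T, p (s i.castSucc) (a i.castSucc) (s i.succ) := by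
  unfold stateW
  rw [Fin.prod_univ_succ]
  congr 1

lemma sum_stateW {T : ℕ} {S A : Type} [Fintype S] (p0 : PMF S) (p : S → A → PMF S)
    (a : Fin (T + 1) → A) : ∑ s : Fin (T + 1) → S, stateW p0 p s a = 1 := by
  simp only [stateW_eq]
  exact chain_sum T p0 (fun i z y => p z (a i.castSucc) y)
    ((tsum_fintype _).symm.trans p0.tsum_coe)
    (fun i z => ((tsum_fintype _).symm.trans (p z (a i.castSucc)).tsum_coe))
theorem cross_entropy_jensen_upper_bound (T : ℕ) (S A : Type)
    [Fintype S] [Nonempty S] [Fintype A] [Nonempty A]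
    (p0 : PMF S) (p : S → A → PMF S) (ν : Adv T S A) (π : Pol T S A)
    (hpos : ∀ (o : Fin (T + 1) → S) (a : Fin (T + 1) → A), rhoV p0 p π o a ≠ 0 →
      ∀ s : Fin (T + 1) → S, stateW p0 p s a ≠ 0 →
        ∀ t : Fin (T + 1), ν t (upTo s t) (below o t) (below a t) (o t) ≠ 0) :
    -∑ x : (Fin (T + 1) → S) × (Fin (T + 1) → A),
        (rhoV p0 p π x.1 x.2).toReal *
          Real.log ((∑ s : Fin (T + 1) → S, rhoA p0 p ν π s x.1 x.2).toReal) ≤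
      -∑ x : (Fin (T + 1) → S) × (Fin (T + 1) → A),
        (rhoV p0 p π x.1 x.2).toReal *
          ((∑ t : Fin (T + 1), Real.log ((π t (upTo x.1 t) (below x.2 t) (x.2 t)).toReal)) +
            ∑ s : Fin (T + 1) → S, (stateW p0 p s x.2).toReal *
              ∑ t : Fin (T + 1),
                Real.log ((ν t (upTo s t) (below x.1 t) (below x.2 t) (x.1 t)).toReal)) := by
  classical
  apply neg_le_neg
  apply Finset.sum_le_sum
  intro x _
  set o := x.1 with ho
  set a := x.2 with ha
  by_cases hV : rhoV p0 p π o a = 0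
  · simp [hV]
  apply mul_le_mul_of_nonneg_left _ ENNReal.toReal_nonneg
  -- basic factor facts
  have hfac : ∀ t : Fin (T + 1),
      ((if t.1 = 0 then p0 (o t)
        else p (o ⟨t.1 - 1, by have := t.2; omega⟩) (a ⟨t.1 - 1, by have := t.2; omega⟩) (o t)) *
        π t (upTo o t) (below a t) (a t)) ≠ 0 := by
    intro t
    have := Finset.prod_ne_zero_iff.mp hV t (Finset.mem_univ t)
    exact this
  have hπne : ∀ t : Fin (T + 1), π t (upTo o t) (below a t) (a t) ≠ 0 :=
    fun t => (mul_ne_zero_iff.mp (hfac t)).2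
  have hWo : stateW p0 p o a ≠ 0 :=
    Finset.prod_ne_zero_iff.mpr (fun t _ => (mul_ne_zero_iff.mp (hfac t)).1)
  -- finiteness
  have hWne : ∀ s : Fin (T + 1) → S, stateW p0 p s a ≠ ⊤ := by
    intro s
    refine ENNReal.prod_ne_top (fun t _ => ?_)
    split <;> exact PMF.apply_ne_top _ _
  have hNne : ∀ s : Fin (T + 1) → S,
      (∏ t : Fin (T + 1), ν t (upTo s t) (below o t) (below a t) (o t)) ≠ ⊤ :=
    fun s => ENNReal.prod_ne_top (fun t _ => PMF.apply_ne_top _ _)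
  have hPne : (∏ t : Fin (T + 1), π t (upTo o t) (below a t) (a t)) ≠ ⊤ :=
    ENNReal.prod_ne_top (fun t _ => PMF.apply_ne_top _ _)
  -- decompositions
  have hAeq : ∀ s : Fin (T + 1) → S, rhoA p0 p ν π s o a =
      stateW p0 p s a * (∏ t : Fin (T + 1), ν t (upTo s t) (below o t) (below a t) (o t)) *
        (∏ t : Fin (T + 1), π t (upTo o t) (below a t) (a t)) := by
    intro s
    show (∏ t : Fin (T + 1), _ * _ * _) = _
    rw [Finset.prod_mul_distrib, Finset.prod_mul_distrib]
    rfl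
  -- weights
  have hw1 : ∑ s : Fin (T + 1) → S, (stateW p0 p s a).toReal = 1 := by
    rw [← ENNReal.toReal_sum (fun s _ => hWne s), sum_stateW p0 p a, ENNReal.toReal_one]
  have hno : 0 < (stateW p0 p o a).toReal := ENNReal.toReal_pos hWo (hWne o)
  have hnpos : ∀ s : Fin (T + 1) → S, stateW p0 p s a ≠ 0 →
      0 < (∏ t : Fin (T + 1), ν t (upTo s t) (below o t) (below a t) (o t)).toReal := by
    intro s hs
    exact ENNReal.toReal_pos
      (Finset.prod_ne_zero_iff.mpr (fun t _ => hpos o a hV s hs t)) (hNne s)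
  have hsumpos : 0 < ∑ s : Fin (T + 1) → S, (stateW p0 p s a).toReal *
      (∏ t : Fin (T + 1), ν t (upTo s t) (below o t) (below a t) (o t)).toReal :=
    Finset.sum_pos' (fun s _ => mul_nonneg ENNReal.toReal_nonneg ENNReal.toReal_nonneg)
      ⟨o, Finset.mem_univ o, mul_pos hno (hnpos o hWo)⟩
  have hPpos : 0 < (∏ t : Fin (T + 1), π t (upTo o t) (below a t) (a t)).toReal :=
    ENNReal.toReal_pos (Finset.prod_ne_zero_iff.mpr (fun t _ => hπne t)) hPne
  -- rewrite the attacked marginal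
  have hsum_eq : (∑ s : Fin (T + 1) → S, rhoA p0 p ν π s o a).toReal =
      (∑ s : Fin (T + 1) → S, (stateW p0 p s a).toReal *
        (∏ t : Fin (T + 1), ν t (upTo s t) (below o t) (below a t) (o t)).toReal) *
        (∏ t : Fin (T + 1), π t (upTo o t) (below a t) (a t)).toReal := by
    rw [ENNReal.toReal_sum (fun s _ => by
      rw [hAeq s]; exact ENNReal.mul_ne_top (ENNReal.mul_ne_top (hWne s) (hNne s)) hPne)]
    rw [Finset.sum_mul]
    refine Finset.sum_congr rfl (fun s _ => ?_)
    rw [hAeq s, ENNReal.toReal_mul, ENNReal.toReal_mul]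
  -- log of the policy product
  have hlogP : ∑ t : Fin (T + 1), Real.log ((π t (upTo o t) (below a t) (a t)).toReal) =
      Real.log ((∏ t : Fin (T + 1), π t (upTo o t) (below a t) (a t)).toReal) := by
    rw [ENNReal.toReal_prod, Real.log_prod (fun t _ =>
      ENNReal.toReal_ne_zero.mpr ⟨hπne t, PMF.apply_ne_top _ _⟩)]
  -- log of the adversary product
  have hlogN : ∀ s : Fin (T + 1) → S, stateW p0 p s a ≠ 0 →
      ∑ t : Fin (T + 1), Real.log ((ν t (upTo s t) (below o t) (below a t) (o t)).toReal) =
      Real.log ((∏ t : Fin (T + 1), ν t (upTo s t) (below o t) (below a t) (o t)).toReal) := by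
    intro s hs
    rw [ENNReal.toReal_prod, Real.log_prod (fun t _ =>
      ENNReal.toReal_ne_zero.mpr ⟨hpos o a hV s hs t, PMF.apply_ne_top _ _⟩)]
  calc (∑ t : Fin (T + 1), Real.log ((π t (upTo o t) (below a t) (a t)).toReal)) +
        ∑ s : Fin (T + 1) → S, (stateW p0 p s a).toReal *
          ∑ t : Fin (T + 1), Real.log ((ν t (upTo s t) (below o t) (below a t) (o t)).toReal)
      = (∑ t : Fin (T + 1), Real.log ((π t (upTo o t) (below a t) (a t)).toReal)) +
        ∑ s : Fin (T + 1) → S, (stateW p0 p s a).toReal *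
          Real.log ((∏ t : Fin (T + 1), ν t (upTo s t) (below o t) (below a t) (o t)).toReal) := by
        congr 1
        refine Finset.sum_congr rfl (fun s _ => ?_)
        by_cases hs : stateW p0 p s a = 0
        · simp [hs]
        · rw [hlogN s hs]
    _ ≤ (∑ t : Fin (T + 1), Real.log ((π t (upTo o t) (below a t) (a t)).toReal)) +
        Real.log (∑ s : Fin (T + 1) → S, (stateW p0 p s a).toReal *
          (∏ t : Fin (T + 1), ν t (upTo s t) (below o t) (below a t) (o t)).toReal) := by
        refine add_le_add (le_refl _) ?_
        refine jensen_log _ _ (fun s => ENNReal.toReal_nonneg) hw1 (fun s hws => ?_)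
        refine hnpos s (fun h => hws ?_)
        rw [h, ENNReal.toReal_zero]
    _ = Real.log ((∑ s : Fin (T + 1) → S, rhoA p0 p ν π s o a).toReal) := by
        rw [hsum_eq, Real.log_mul hsumpos.ne' hPpos.ne', hlogP, add_comm]
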